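/- Let K be an abstract simplicial complex on [m]. Define the cap product ⌢ : C^*((D^1,S^0)^K) ⊗ C_*((D^1,S^0)^K) → C_*((D^1,S^0)^K) on basis elements by u^σ t^τ ⌢ u_{σ''} ε_{τ''} = (−1)^{e} Σ_{γ ⊆ τ∖σ''} u_{σ''∖σ} ε_{τ''∖γ} if σ ⊆ σ'' and τ ⊆ σ''∪τ'', where e = Σ_{i∈σ} card{j ∈ σ''∖σ : j > i} mod 2, and u^σ t^τ ⌢ u_{σ''} ε_{τ''} = 0 otherwise. Then for all basis elements, with p = card(σ) and r = card(σ''), the Leibniz identity ∂(u^σ t^τ ⌢ u_{σ''} ε_{τ''}) = (−1)^{r−p} d(u^σ t^τ) ⌢ u_{σ''} ε_{τ''} + u^σ t^τ ⌢ ∂(u_{σ''} ε_{τ''}) holds. -/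

import Mathlib

structure ASC (m : ℕ) where
  faces : Set (Finset (Fin m))
  empty_mem : ∅ ∈ faces
  down_closed : ∀ {σ τ : Finset (Fin m)}, σ ∈ faces → τ ⊆ σ → τ ∈ faces

def csg {m : ℕ} (i : Fin m) (σ : Finset (Fin m)) : ℤ :=
  (-1) ^ (σ.filter (fun j => j < i)).card

variable {m : ℕ}

/-- Index of the cellular basis words `u_σ ε_τ` resp. `u^σ t^τ`. -/
def DSIdx (K : ASC m) : Type :=
  {p : Finset (Fin m) × Finset (Fin m) // p.1 ∈ K.faces ∧ Disjoint p.1 p.2}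

abbrev DSChain (K : ASC m) : Type := DSIdx K →₀ ℤ

/-- the boundary `∂(u_σ ε_τ) = ∑_{i ∈ σ} (-1)^{(i,σ)} u_{σ∖i} ε_{τ∪i}` -/
noncomputable def DSbnd (K : ASC m) : DSChain K →ₗ[ℤ] DSChain K :=
  Finsupp.lift (DSChain K) ℤ (DSIdx K) fun b =>
    ∑ i ∈ b.1.1, csg i b.1.1 •
      Finsupp.single (⟨(b.1.1.erase i, insert i b.1.2),
        ⟨K.down_closed b.2.1 (Finset.erase_subset _ _), by
          refine Finset.disjoint_left.2 fun a ha hb => ?_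
          rcases Finset.mem_insert.1 hb with h | h
          · exact (Finset.mem_erase.1 ha).1 h
          · exact (Finset.disjoint_left.1 b.2.2 (Finset.mem_of_mem_erase ha)) h⟩⟩ : DSIdx K)
        (1 : ℤ)

open Classical in
/-- the coboundary `d(u^σ t^τ) = ∑_{i ∈ τ, σ∪{i} ∈ K} (-1)^{(i,σ)} u^{σ∪{i}} t^{τ∖{i}}` -/
noncomputable def DScob (K : ASC m) : DSChain K →ₗ[ℤ] DSChain K :=
  Finsupp.lift (DSChain K) ℤ (DSIdx K) fun b =>
    ∑ i ∈ b.1.2,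
      if h : insert i b.1.1 ∈ K.faces then
        csg i b.1.1 •
          Finsupp.single (⟨(insert i b.1.1, b.1.2.erase i),
            ⟨h, by
              refine Finset.disjoint_left.2 fun a ha hb => ?_
              rcases Finset.mem_insert.1 ha with h' | h'
              · exact (Finset.mem_erase.1 hb).1 h'
              · exact (Finset.disjoint_left.1 b.2.2 h') (Finset.mem_of_mem_erase hb)⟩⟩ :
              DSIdx K) (1 : ℤ)
      else 0

open Classical in
/-- the cap product of basis elements:
`u^σ t^τ ⌢ u_{σ''} ε_{τ''} = (-1)^e ∑_{γ ⊆ τ∖σ''} u_{σ''∖σ} ε_{τ''∖γ}`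
when `σ ⊆ σ''` and `τ ⊆ σ'' ∪ τ''`, and `0` otherwise, where
`e = ∑_{i ∈ σ} card {j ∈ σ''∖σ : j > i}`. -/
noncomputable def capMon (K : ASC m) (a b : DSIdx K) : DSChain K :=
  if a.1.1 ⊆ b.1.1 ∧ a.1.2 ⊆ b.1.1 ∪ b.1.2 then
    ((-1 : ℤ) ^ (∑ i ∈ a.1.1, ((b.1.1 \ a.1.1).filter (fun j => i < j)).card)) •
      ∑ γ ∈ (a.1.2 \ b.1.1).powerset,
        Finsupp.single (⟨(b.1.1 \ a.1.1, b.1.2 \ γ),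
          ⟨K.down_closed b.2.1 (Finset.sdiff_subset),
           Finset.disjoint_of_subset_left Finset.sdiff_subset
             (Finset.disjoint_of_subset_right Finset.sdiff_subset b.2.2)⟩⟩ : DSIdx K)
          (1 : ℤ)
  else 0

/-- the cap product, extended bilinearly -/
noncomputable def capProd (K : ASC m) : DSChain K →ₗ[ℤ] DSChain K →ₗ[ℤ] DSChain K :=
  Finsupp.lift (DSChain K →ₗ[ℤ] DSChain K) ℤ (DSIdx K) fun a =>
    Finsupp.lift (DSChain K) ℤ (DSIdx K) fun b => capMon K a b

/-! ### Auxiliary lemmas -/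

section Aux

variable {K : ASC m}

lemma lift_single_chain (f : DSIdx K → DSChain K) (a : DSIdx K) :
    Finsupp.lift (DSChain K) ℤ (DSIdx K) f (Finsupp.single a 1) = f a := by
  rw [Finsupp.lift_apply]
  exact (Finsupp.sum_single_index (by exact zero_smul ℤ (f a))).trans (one_smul ℤ (f a))

lemma lift_single_lin (f : DSIdx K → (DSChain K →ₗ[ℤ] DSChain K)) (a : DSIdx K) :
    Finsupp.lift (DSChain K →ₗ[ℤ] DSChain K) ℤ (DSIdx K) f (Finsupp.single a 1) = f a := by
  rw [Finsupp.lift_apply]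
  exact (Finsupp.sum_single_index (by exact zero_smul ℤ (f a))).trans (one_smul ℤ (f a))

lemma single_pair_congr {x y : Finset (Fin m) × Finset (Fin m)} (h : x = y)
    (px : x.1 ∈ K.faces ∧ Disjoint x.1 x.2) (py : y.1 ∈ K.faces ∧ Disjoint y.1 y.2) :
    (Finsupp.single (⟨x, px⟩ : DSIdx K) (1:ℤ)) = Finsupp.single ⟨y, py⟩ 1 := by
  subst h; rfl

lemma negOnePow_nat (n : ℕ) : (((n : ℤ).negOnePow : ℤ)) = (-1 : ℤ) ^ n := by
  induction n with
  | zero => rfl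
  | succ n ih => push_cast; rw [Int.negOnePow_succ]; push_cast [ih, pow_succ]; ring

lemma capProd_single_single (a b : DSIdx K) :
    capProd K (Finsupp.single a 1) (Finsupp.single b 1) = capMon K a b := by
  rw [capProd, lift_single_lin, lift_single_chain]

end Aux

/-! ### sign lemmas -/

lemma sum_filter_erase (σ S1 : Finset (Fin m)) {k : Fin m} (hk : k ∈ S1) :
    ∑ i ∈ σ, (S1.filter (fun j => i < j)).card =
      (∑ i ∈ σ, ((S1.erase k).filter (fun j => i < j)).card) +
        (σ.filter (fun j => j < k)).card := by
  rw [Finset.card_filter, ← Finset.sum_add_distrib]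
  refine Finset.sum_congr rfl fun i _ => ?_
  conv_lhs => rw [← Finset.insert_erase hk]
  rw [Finset.filter_insert]
  split_ifs with h
  · rw [Finset.card_insert_of_notMem
      (fun hmem => (Finset.mem_erase.1 (Finset.mem_filter.1 hmem).1).1 rfl)]
  · rfl

lemma filter_sdiff_card (σ σ'' : Finset (Fin m)) (h : σ ⊆ σ'') (p : Fin m → Prop)
    [DecidablePred p] :
    (σ''.filter p).card = (σ.filter p).card + ((σ'' \ σ).filter p).card := by
  rw [← Finset.card_union_of_disjoint, ← Finset.filter_union, Finset.union_sdiff_of_subset h]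
  exact Finset.disjoint_filter_filter (Finset.disjoint_sdiff)

lemma filter_lt_erase (S1 : Finset (Fin m)) (i : Fin m) :
    (S1.erase i).filter (fun j => j < i) = S1.filter (fun j => j < i) := by
  ext x
  simp only [Finset.mem_filter, Finset.mem_erase]
  exact ⟨fun ⟨⟨_, hx⟩, hlt⟩ => ⟨hx, hlt⟩, fun ⟨hx, hlt⟩ => ⟨⟨ne_of_lt hlt, hx⟩, hlt⟩⟩

lemma card_split_lt (A : Finset (Fin m)) (i : Fin m) (hi : i ∉ A) :
    A.card = (A.filter (fun j => j < i)).card + (A.filter (fun j => i < j)).card := by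
  rw [← Finset.card_filter_add_card_filter_not (p := fun j => j < i)]
  congr 1
  refine congrArg Finset.card (Finset.filter_congr fun x hx => ?_)
  simp only [not_lt]
  constructor
  · intro hle; exact lt_of_le_of_ne hle (fun he => hi (he ▸ hx))
  · exact le_of_lt

lemma sgnA (σ σ'' : Finset (Fin m)) (h : σ ⊆ σ'') (k : Fin m) (hk : k ∈ σ'' \ σ) :
    (-1:ℤ)^(∑ i ∈ σ, ((σ''\σ).filter (fun j => i < j)).card) * csg k (σ''\σ)
      = csg k σ'' * (-1:ℤ)^(∑ i ∈ σ, (((σ''\σ).erase k).filter (fun j => i < j)).card) := by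
  unfold csg
  rw [← pow_add, ← pow_add]
  congr 1
  rw [sum_filter_erase σ (σ''\σ) hk, filter_sdiff_card σ σ'' h (fun j => j < k)]
  ring

lemma sgnB (σ σ'' : Finset (Fin m)) (h : σ ⊆ σ'') (i : Fin m) (hi : i ∈ σ'' \ σ)
    (hiσ : i ∉ σ) :
    ((-1:ℤ)^((σ''\σ).card)) *
        (csg i σ * (-1:ℤ)^(∑ j ∈ insert i σ, (((σ''\σ).erase i).filter (fun l => j < l)).card))
      = -(csg i σ'' * (-1:ℤ)^(∑ j ∈ σ, (((σ''\σ).erase i).filter (fun l => j < l)).card)) := by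
  set A := (σ''\σ).erase i with hA
  rw [Finset.sum_insert hiσ]
  unfold csg
  have hiA : i ∉ A := Finset.notMem_erase _ _
  have hcard : (σ''\σ).card = A.card + 1 := by
    rw [hA, Finset.card_erase_of_mem hi]
    have : 0 < (σ''\σ).card := Finset.card_pos.2 ⟨i, hi⟩
    omega
  have hsplit : A.card = (A.filter (fun j => j < i)).card + (A.filter (fun j => i < j)).card :=
    card_split_lt A i hiA
  have hfil : (σ''.filter (fun j => j < i)).card
      = (σ.filter (fun j => j < i)).card + (A.filter (fun j => j < i)).card := by
    rw [filter_sdiff_card σ σ'' h (fun j => j < i), hA, filter_lt_erase]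
  rw [← pow_add, ← pow_add, hcard, hfil]
  rw [← pow_add, hsplit]
  have hneg : ∀ n : ℕ, -((-1:ℤ)^n) = (-1)^(n+1) := fun n => by rw [pow_succ]; ring
  rw [hneg]
  set c := (Finset.filter (fun j => j < i) σ).card
  set q := (Finset.filter (fun j => j < i) A).card
  set q' := (Finset.filter (fun l => i < l) A).card
  set eA := ∑ x ∈ σ, (Finset.filter (fun l => x < l) A).card
  have hexp : q + q' + 1 + (c + (q' + eA)) = (c + q + eA + 1) + 2 * q' := by omega
  rw [hexp, pow_add, pow_mul, neg_one_sq, one_pow, mul_one]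

/-! ### finset identities -/

lemma erase_union_insert {σ'' τ'' : Finset (Fin m)} {k : Fin m} (hk : k ∈ σ'') :
    σ''.erase k ∪ insert k τ'' = σ'' ∪ τ'' := by
  ext x
  simp only [Finset.mem_union, Finset.mem_erase, Finset.mem_insert]
  constructor
  · rintro (⟨_, h⟩ | h | h)
    · exact Or.inl h
    · exact Or.inl (h ▸ hk)
    · exact Or.inr h
  · rintro (h | h)
    · by_cases hxk : x = k
      · exact Or.inr (Or.inl hxk)
      · exact Or.inl ⟨hxk, h⟩
    · exact Or.inr (Or.inr h)

lemma sdiff_erase_of_mem_not_mem {τ σ'' : Finset (Fin m)} {k : Fin m} (hk1 : k ∈ τ)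
    (hk2 : k ∈ σ'') : τ \ σ''.erase k = insert k (τ \ σ'') := by
  ext x
  simp only [Finset.mem_sdiff, Finset.mem_erase, Finset.mem_insert, not_and]
  constructor
  · rintro ⟨hxτ, hx⟩
    by_cases hxk : x = k
    · exact Or.inl hxk
    · exact Or.inr ⟨hxτ, fun hxσ => hxk (hx hxk hxσ |>.elim)⟩
  · rintro (rfl | ⟨hxτ, hxσ⟩)
    · exact ⟨hk1, fun h _ => (h rfl).elim⟩
    · exact ⟨hxτ, fun _ h => absurd h hxσ⟩
  
lemma sdiff_erase_of_not_mem {τ σ'' : Finset (Fin m)} {k : Fin m} (hk1 : k ∉ τ) :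
    τ \ σ''.erase k = τ \ σ'' := by
  ext x
  simp only [Finset.mem_sdiff, Finset.mem_erase, not_and]
  constructor
  · rintro ⟨hxτ, hx⟩
    refine ⟨hxτ, fun hxσ => ?_⟩
    by_cases hxk : x = k
    · exact hk1 (hxk ▸ hxτ)
    · exact (hx hxk hxσ).elim
  · rintro ⟨hxτ, hxσ⟩
    exact ⟨hxτ, fun _ h => absurd h hxσ⟩

lemma insert_sdiff_insert_eq {τ'' γ : Finset (Fin m)} {k : Fin m} (hk : k ∉ τ'') :
    insert k τ'' \ insert k γ = τ'' \ γ := by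
  ext x
  simp only [Finset.mem_sdiff, Finset.mem_insert, not_or]
  constructor
  · rintro ⟨(rfl | hx), hnk, hnγ⟩
    · exact absurd rfl hnk
    · exact ⟨hx, hnγ⟩
  · rintro ⟨hx, hnγ⟩
    have hxk : x ≠ k := fun h => hk (h ▸ hx)
    exact ⟨Or.inr hx, hxk, hnγ⟩


section Unfold
variable {K : ASC m}

open Classical in
lemma capProd_cob (a b : DSIdx K) :
    capProd K (DScob K (Finsupp.single a 1)) (Finsupp.single b 1)
      = ∑ i ∈ a.1.2, if h : insert i a.1.1 ∈ K.faces then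
          csg i a.1.1 • capMon K (⟨(insert i a.1.1, a.1.2.erase i),
            ⟨h, by
              refine Finset.disjoint_left.2 fun x hx hx' => ?_
              rcases Finset.mem_insert.1 hx with h' | h'
              · exact (Finset.mem_erase.1 hx').1 h'
              · exact (Finset.disjoint_left.1 a.2.2 h') (Finset.mem_of_mem_erase hx')⟩⟩ : DSIdx K) b
        else 0 := by
  rw [DScob, lift_single_chain, map_sum, LinearMap.coe_sum, Finset.sum_apply]
  refine Finset.sum_congr rfl fun i _ => ?_
  by_cases h : insert i a.1.1 ∈ K.faces
  · erw [dif_pos h, dif_pos h, map_smul, LinearMap.smul_apply, capProd_single_single]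
  · erw [dif_neg h, dif_neg h, map_zero, LinearMap.zero_apply]

lemma capProd_bnd (a b : DSIdx K) :
    capProd K (Finsupp.single a 1) (DSbnd K (Finsupp.single b 1))
      = ∑ k ∈ b.1.1, csg k b.1.1 • capMon K a (⟨(b.1.1.erase k, insert k b.1.2),
          ⟨K.down_closed b.2.1 (Finset.erase_subset _ _), by
            refine Finset.disjoint_left.2 fun x hx hx' => ?_
            rcases Finset.mem_insert.1 hx' with h | h
            · exact (Finset.mem_erase.1 hx).1 h
            · exact (Finset.disjoint_left.1 b.2.2 (Finset.mem_of_mem_erase hx)) h⟩⟩ : DSIdx K) := by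
  rw [capProd, lift_single_lin, DSbnd, lift_single_chain]
  refine (map_sum _ _ _).trans ?_
  exact Finset.sum_congr rfl fun k _ => by erw [map_smul, lift_single_chain]

end Unfold


section Canon
variable {K : ASC m}

lemma DSbnd_single (c : DSIdx K) :
    DSbnd K (Finsupp.single c 1) = ∑ i ∈ c.1.1, csg i c.1.1 •
      Finsupp.single (⟨(c.1.1.erase i, insert i c.1.2),
        ⟨K.down_closed c.2.1 (Finset.erase_subset _ _), by
          refine Finset.disjoint_left.2 fun x hx hx' => ?_
          rcases Finset.mem_insert.1 hx' with h | h
          · exact (Finset.mem_erase.1 hx).1 h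
          · exact (Finset.disjoint_left.1 c.2.2 (Finset.mem_of_mem_erase hx)) h⟩⟩ : DSIdx K)
        (1 : ℤ) := by
  rw [DSbnd, lift_single_chain]
  rfl

end Canon

noncomputable def Wfun (K : ASC m) (σ τ σ'' τ'' : Finset (Fin m)) (hbK : σ'' ∈ K.faces)
    (hbD : Disjoint σ'' τ'') (k : Fin m) : DSChain K :=
  ∑ γ ∈ (τ \ σ'').powerset,
    Finsupp.single (⟨((σ''\σ).erase k, insert k (τ''\γ)),
      ⟨K.down_closed hbK ((Finset.erase_subset _ _).trans Finset.sdiff_subset),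
       Finset.disjoint_insert_right.2 ⟨Finset.notMem_erase _ _,
         Finset.disjoint_of_subset_left ((Finset.erase_subset _ _).trans Finset.sdiff_subset)
           (Finset.disjoint_of_subset_right Finset.sdiff_subset hbD)⟩⟩⟩ : DSIdx K) (1:ℤ)

noncomputable def Vfun (K : ASC m) (σ τ σ'' τ'' : Finset (Fin m)) (hbK : σ'' ∈ K.faces)
    (hbD : Disjoint σ'' τ'') (k : Fin m) : DSChain K :=
  ∑ γ ∈ (τ \ σ'').powerset,
    Finsupp.single (⟨((σ''\σ).erase k, τ''\γ),
      ⟨K.down_closed hbK ((Finset.erase_subset _ _).trans Finset.sdiff_subset),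
       Finset.disjoint_of_subset_left ((Finset.erase_subset _ _).trans Finset.sdiff_subset)
         (Finset.disjoint_of_subset_right Finset.sdiff_subset hbD)⟩⟩ : DSIdx K) (1:ℤ)

def cWc (σ σ'' : Finset (Fin m)) (k : Fin m) : ℤ :=
  csg k σ'' * (-1)^(∑ j ∈ σ, (((σ''\σ).erase k).filter (fun l => j < l)).card)

def cVc (σ σ'' : Finset (Fin m)) (k : Fin m) : ℤ :=
  csg k σ * (-1)^(∑ j ∈ insert k σ, (((σ''\σ).erase k).filter (fun l => j < l)).card)

lemma sgnB' (σ σ'' : Finset (Fin m)) (h : σ ⊆ σ'') (i : Fin m) (hi : i ∈ σ'' \ σ) :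
    ((-1:ℤ)^((σ''\σ).card)) * cVc σ σ'' i = - cWc σ σ'' i := by
  have hiσ : i ∉ σ := (Finset.mem_sdiff.1 hi).2
  rw [cVc, cWc, ← mul_assoc]
  rw [show ((-1:ℤ)^((σ''\σ).card)) * csg i σ * (-1)^(∑ j ∈ insert i σ, (((σ''\σ).erase i).filter (fun l => j < l)).card) = ((-1:ℤ)^((σ''\σ).card)) * (csg i σ * (-1)^(∑ j ∈ insert i σ, (((σ''\σ).erase i).filter (fun l => j < l)).card)) from by ring]
  rw [sgnB σ σ'' h i hi hiσ]


open Classical in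
lemma capMon_pos {K : ASC m} (a b : DSIdx K) (h1 : a.1.1 ⊆ b.1.1)
    (h2 : a.1.2 ⊆ b.1.1 ∪ b.1.2) :
    capMon K a b
      = ((-1 : ℤ) ^ (∑ i ∈ a.1.1, ((b.1.1 \ a.1.1).filter (fun j => i < j)).card)) •
        ∑ γ ∈ (a.1.2 \ b.1.1).powerset,
          Finsupp.single (⟨(b.1.1 \ a.1.1, b.1.2 \ γ),
            ⟨K.down_closed b.2.1 (Finset.sdiff_subset),
             Finset.disjoint_of_subset_left Finset.sdiff_subset
               (Finset.disjoint_of_subset_right Finset.sdiff_subset b.2.2)⟩⟩ : DSIdx K)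
            (1 : ℤ) := by
  rw [capMon]; exact if_pos ⟨h1, h2⟩

lemma capMon_neg {K : ASC m} (a b : DSIdx K)
    (h : ¬ (a.1.1 ⊆ b.1.1 ∧ a.1.2 ⊆ b.1.1 ∪ b.1.2)) : capMon K a b = 0 := by
  rw [capMon]; exact if_neg h


lemma disj_help {σ'' τ'' : Finset (Fin m)} (hbD : Disjoint σ'' τ'') {s t : Finset (Fin m)}
    {k : Fin m} (hs : s ⊆ σ''.erase k) (ht : t ⊆ insert k τ'') : Disjoint s t := by
  refine Finset.disjoint_left.2 fun x hx hx' => ?_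
  obtain ⟨hxk, hxσ⟩ := Finset.mem_erase.1 (hs hx)
  rcases Finset.mem_insert.1 (ht hx') with h | h
  · exact hxk h
  · exact Finset.disjoint_left.1 hbD hxσ h

/-! ### main theorem -/





lemma smul_sum_chain {K : ASC m} {ι : Type*} (c : ℤ) (s : Finset ι) (f : ι → DSChain K) :
    c • ∑ i ∈ s, f i = ∑ i ∈ s, c • f i := Finset.smul_sum

theorem stmt14 (K : ASC m) (a b : DSIdx K) :
    DSbnd K (capProd K (Finsupp.single a 1) (Finsupp.single b 1)) =
      (((((b.1.1.card : ℤ) - (a.1.1.card : ℤ)).negOnePow : ℤ)) •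
        capProd K (DScob K (Finsupp.single a 1)) (Finsupp.single b 1)) +
      capProd K (Finsupp.single a 1) (DSbnd K (Finsupp.single b 1)) := by
  classical
  rw [capProd_single_single, capProd_cob, capProd_bnd]
  obtain ⟨⟨σ, τ⟩, haK, haD⟩ := a
  obtain ⟨⟨σ'', τ''⟩, hbK, hbD⟩ := b
  dsimp only
  by_cases hC : σ ⊆ σ'' ∧ τ ⊆ σ'' ∪ τ''
  · obtain ⟨hσ, hτ⟩ := hC
    have hN : ((((σ''.card : ℤ) - (σ.card : ℤ)).negOnePow : ℤ)) = (-1:ℤ)^((σ''\σ).card) := by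
      have hc := Finset.card_sdiff_add_card_eq_card hσ
      rw [show ((σ''.card : ℤ) - (σ.card : ℤ)) = (((σ''\σ).card : ℕ) : ℤ) from by omega,
        negOnePow_nat]
    have hL : DSbnd K (capMon K (⟨(σ,τ),haK,haD⟩ : DSIdx K) ⟨(σ'',τ''),hbK,hbD⟩)
        = ∑ k ∈ σ''\σ, cWc σ σ'' k • Wfun K σ τ σ'' τ'' hbK hbD k := by
      rw [capMon_pos (⟨(σ,τ),haK,haD⟩ : DSIdx K) ⟨(σ'',τ''),hbK,hbD⟩ hσ hτ]
      erw [map_smul, map_sum,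
        Finset.sum_congr rfl fun γ _ => DSbnd_single _]
      dsimp only
      erw [Finset.smul_sum]
      refine Eq.trans (Finset.sum_congr rfl fun γ _ => smul_sum_chain _ _ _) ?_
      erw [Finset.sum_comm]
      refine Finset.sum_congr rfl fun k hk => ?_
      rw [Wfun, Finset.smul_sum]
      refine Finset.sum_congr rfl fun γ hγ => ?_
      erw [smul_smul]
      have hco : (-1:ℤ) ^ (∑ i ∈ σ, (((σ''\σ)).filter (fun j => i < j)).card) * csg k (σ''\σ)
          = cWc σ σ'' k := by
        rw [cWc]; exact sgnA σ σ'' hσ k hk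
      rw [hco]
      rfl
    have hR1 : (∑ i ∈ τ, if h : insert i σ ∈ K.faces then
        csg i σ • capMon K (⟨(insert i σ, τ.erase i), ⟨h, by
          refine Finset.disjoint_left.2 fun x hx hx' => ?_
          rcases Finset.mem_insert.1 hx with h' | h'
          · exact (Finset.mem_erase.1 hx').1 h'
          · exact (Finset.disjoint_left.1 haD h') (Finset.mem_of_mem_erase hx')⟩⟩ : DSIdx K)
          ⟨(σ'',τ''),hbK,hbD⟩ else 0)
        = ∑ i ∈ (σ''\σ) ∩ τ, cVc σ σ'' i • Vfun K σ τ σ'' τ'' hbK hbD i := by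
      have hTsub : (σ''\σ) ∩ τ ⊆ τ := Finset.inter_subset_right
      have hzero : ∀ i ∈ τ, i ∉ (σ''\σ) ∩ τ → (if h : insert i σ ∈ K.faces then
          csg i σ • capMon K (⟨(insert i σ, τ.erase i), ⟨h, by
            refine Finset.disjoint_left.2 fun x hx hx' => ?_
            rcases Finset.mem_insert.1 hx with h' | h'
            · exact (Finset.mem_erase.1 hx').1 h'
            · exact (Finset.disjoint_left.1 haD h') (Finset.mem_of_mem_erase hx')⟩⟩ : DSIdx K)
            ⟨(σ'',τ''),hbK,hbD⟩ else 0) = 0 := by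
        intro i hiτ hiT
        have hiσ : i ∉ σ := Finset.disjoint_right.1 haD hiτ
        have hiσ'' : i ∉ σ'' := fun h =>
          hiT (Finset.mem_inter.2 ⟨Finset.mem_sdiff.2 ⟨h, hiσ⟩, hiτ⟩)
        split_ifs with h
        · refine (congrArg (csg i σ • ·) (capMon_neg _ _ ?_)).trans (smul_zero _)
          rintro ⟨h1, -⟩
          exact hiσ'' (h1 (Finset.mem_insert_self i σ))
        · rfl
      rw [← Finset.sum_subset hTsub hzero]
      refine Finset.sum_congr rfl fun i hi => ?_
      have hiS1 : i ∈ σ''\σ := (Finset.mem_inter.1 hi).1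
      have hiσ'' : i ∈ σ'' := (Finset.mem_sdiff.1 hiS1).1
      have hiσ : i ∉ σ := (Finset.mem_sdiff.1 hiS1).2
      have hins : insert i σ ⊆ σ'' := Finset.insert_subset hiσ'' hσ
      rw [dif_pos (K.down_closed hbK hins)]
      rw [capMon_pos (⟨(insert i σ, τ.erase i), _⟩ : DSIdx K) ⟨(σ'',τ''),hbK,hbD⟩ hins ((Finset.erase_subset _ _).trans hτ)]
      dsimp only
      have hP : τ.erase i \ σ'' = τ \ σ'' := by
        rw [Finset.erase_sdiff_comm,
          Finset.erase_eq_of_notMem (fun hmem => (Finset.mem_sdiff.1 hmem).2 hiσ'')]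
      rw [hP]
      have hsingles : ∀ γ ∈ (τ \ σ'').powerset,
          (Finsupp.single (⟨(σ'' \ insert i σ, τ'' \ γ),
            ⟨K.down_closed hbK Finset.sdiff_subset,
             Finset.disjoint_of_subset_left Finset.sdiff_subset
               (Finset.disjoint_of_subset_right Finset.sdiff_subset hbD)⟩⟩ : DSIdx K) (1:ℤ))
          = Finsupp.single (⟨((σ''\σ).erase i, τ''\γ),
              ⟨K.down_closed hbK ((Finset.erase_subset _ _).trans Finset.sdiff_subset),
               Finset.disjoint_of_subset_left ((Finset.erase_subset _ _).trans Finset.sdiff_subset)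
                 (Finset.disjoint_of_subset_right Finset.sdiff_subset hbD)⟩⟩ : DSIdx K) 1 :=
        fun γ _ => single_pair_congr (by rw [Finset.sdiff_insert]) _ _
      erw [Finset.sum_congr rfl hsingles, Finset.sdiff_insert, smul_smul]
      rfl
    have hR2 : (∑ k ∈ σ'', csg k σ'' • capMon K (⟨(σ,τ),haK,haD⟩ : DSIdx K)
        (⟨(σ''.erase k, insert k τ''), ⟨K.down_closed hbK (Finset.erase_subset _ _), by
          refine Finset.disjoint_left.2 fun x hx hx' => ?_
          rcases Finset.mem_insert.1 hx' with h | h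
          · exact (Finset.mem_erase.1 hx).1 h
          · exact (Finset.disjoint_left.1 hbD (Finset.mem_of_mem_erase hx)) h⟩⟩ : DSIdx K))
        = (∑ k ∈ σ''\σ, cWc σ σ'' k • Wfun K σ τ σ'' τ'' hbK hbD k)
          + ∑ i ∈ (σ''\σ) ∩ τ, cWc σ σ'' i • Vfun K σ τ σ'' τ'' hbK hbD i := by
      have hS1sub : σ''\σ ⊆ σ'' := Finset.sdiff_subset
      have hzero : ∀ k ∈ σ'', k ∉ σ''\σ → csg k σ'' • capMon K (⟨(σ,τ),haK,haD⟩ : DSIdx K)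
          (⟨(σ''.erase k, insert k τ''), ⟨K.down_closed hbK (Finset.erase_subset _ _), by
            refine Finset.disjoint_left.2 fun x hx hx' => ?_
            rcases Finset.mem_insert.1 hx' with h | h
            · exact (Finset.mem_erase.1 hx).1 h
            · exact (Finset.disjoint_left.1 hbD (Finset.mem_of_mem_erase hx)) h⟩⟩ : DSIdx K)
          = 0 := by
        intro k hkσ'' hkS1
        have hkσ : k ∈ σ := by
          by_contra hk
          exact hkS1 (Finset.mem_sdiff.2 ⟨hkσ'', hk⟩)
        refine (congrArg (csg k σ'' • ·) (capMon_neg _ _ ?_)).trans (smul_zero _)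
        rintro ⟨h1, -⟩
        exact (Finset.mem_erase.1 (h1 hkσ)).1 rfl
      rw [← Finset.sum_subset hS1sub hzero]
      have hsplit : ∀ k ∈ σ''\σ, csg k σ'' • capMon K (⟨(σ,τ),haK,haD⟩ : DSIdx K)
          (⟨(σ''.erase k, insert k τ''), ⟨K.down_closed hbK (Finset.erase_subset _ _), by
            refine Finset.disjoint_left.2 fun x hx hx' => ?_
            rcases Finset.mem_insert.1 hx' with h | h
            · exact (Finset.mem_erase.1 hx).1 h
            · exact (Finset.disjoint_left.1 hbD (Finset.mem_of_mem_erase hx)) h⟩⟩ : DSIdx K)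
          = cWc σ σ'' k • Wfun K σ τ σ'' τ'' hbK hbD k
            + (if k ∈ τ then cWc σ σ'' k • Vfun K σ τ σ'' τ'' hbK hbD k else 0) := by
        intro k hk
        have hkσ'' : k ∈ σ'' := (Finset.mem_sdiff.1 hk).1
        have hkσ : k ∉ σ := (Finset.mem_sdiff.1 hk).2
        have hkτ'' : k ∉ τ'' := Finset.disjoint_left.1 hbD hkσ''
        have h1 : σ ⊆ σ''.erase k := Finset.subset_erase.2 ⟨hσ, hkσ⟩
        have h2 : τ ⊆ σ''.erase k ∪ insert k τ'' := by
          rw [erase_union_insert hkσ'']; exact hτ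
        rw [capMon_pos (⟨(σ,τ),haK,haD⟩ : DSIdx K) ⟨(σ''.erase k, insert k τ''), _⟩ h1 h2]
        dsimp only
        have hkΔ : k ∉ τ \ σ'' := fun h => (Finset.mem_sdiff.1 h).2 hkσ''
        by_cases hkτ : k ∈ τ
        · rw [if_pos hkτ, sdiff_erase_of_mem_not_mem hkτ hkσ'',
            Finset.sum_powerset_insert hkΔ]
          have hw : ∀ γ ∈ (τ \ σ'').powerset,
              (Finsupp.single (⟨(σ''.erase k \ σ, insert k τ'' \ γ),
                ⟨K.down_closed hbK (Finset.sdiff_subset.trans (Finset.erase_subset _ _)),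
                 disj_help hbD Finset.sdiff_subset Finset.sdiff_subset⟩⟩ : DSIdx K) (1:ℤ))
              = Finsupp.single (⟨((σ''\σ).erase k, insert k (τ''\γ)),
                  ⟨K.down_closed hbK ((Finset.erase_subset _ _).trans Finset.sdiff_subset),
                   disj_help hbD (Finset.erase_subset_erase _ Finset.sdiff_subset)
                     (Finset.insert_subset_insert _ Finset.sdiff_subset)⟩⟩ : DSIdx K) 1 := by
            intro γ hγ
            have hkγ : k ∉ γ := fun h => hkΔ (Finset.mem_powerset.1 hγ h)
            exact single_pair_congr
              (by rw [Finset.erase_sdiff_comm, Finset.insert_sdiff_of_notMem _ hkγ]) _ _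
          have hv : ∀ γ ∈ (τ \ σ'').powerset,
              (Finsupp.single (⟨(σ''.erase k \ σ, insert k τ'' \ insert k γ),
                ⟨K.down_closed hbK (Finset.sdiff_subset.trans (Finset.erase_subset _ _)),
                 disj_help hbD Finset.sdiff_subset Finset.sdiff_subset⟩⟩ : DSIdx K) (1:ℤ))
              = Finsupp.single (⟨((σ''\σ).erase k, τ''\γ),
                  ⟨K.down_closed hbK ((Finset.erase_subset _ _).trans Finset.sdiff_subset),
                   disj_help hbD (Finset.erase_subset_erase _ Finset.sdiff_subset)
                     (Finset.sdiff_subset.trans (Finset.subset_insert _ _))⟩⟩ : DSIdx K) 1 :=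
            fun γ _ => single_pair_congr
              (by rw [Finset.erase_sdiff_comm, insert_sdiff_insert_eq hkτ'']) _ _
          erw [Finset.sum_congr rfl hw, Finset.sum_congr rfl hv, Finset.erase_sdiff_comm,
            smul_add, smul_add, smul_smul, smul_smul]
          rfl
        · rw [if_neg hkτ, add_zero, sdiff_erase_of_not_mem hkτ]
          have hw : ∀ γ ∈ (τ \ σ'').powerset,
              (Finsupp.single (⟨(σ''.erase k \ σ, insert k τ'' \ γ),
                ⟨K.down_closed hbK (Finset.sdiff_subset.trans (Finset.erase_subset _ _)),
                 disj_help hbD Finset.sdiff_subset Finset.sdiff_subset⟩⟩ : DSIdx K) (1:ℤ))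
              = Finsupp.single (⟨((σ''\σ).erase k, insert k (τ''\γ)),
                  ⟨K.down_closed hbK ((Finset.erase_subset _ _).trans Finset.sdiff_subset),
                   disj_help hbD (Finset.erase_subset_erase _ Finset.sdiff_subset)
                     (Finset.insert_subset_insert _ Finset.sdiff_subset)⟩⟩ : DSIdx K) 1 := by
            intro γ hγ
            have hkγ : k ∉ γ := fun h => hkτ (Finset.mem_sdiff.1 (Finset.mem_powerset.1 hγ h)).1
            exact single_pair_congr
              (by rw [Finset.erase_sdiff_comm, Finset.insert_sdiff_of_notMem _ hkγ]) _ _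
          erw [Finset.sum_congr rfl hw, Finset.erase_sdiff_comm, smul_smul]
          rfl
      rw [Finset.sum_congr rfl hsplit, Finset.sum_add_distrib, Finset.sum_ite_mem]
    rw [hL, hR1, hR2, hN, Finset.smul_sum]
    have hcancel : ∀ i ∈ (σ''\σ) ∩ τ,
        (-1:ℤ)^((σ''\σ).card) • (cVc σ σ'' i • Vfun K σ τ σ'' τ'' hbK hbD i)
          = -(cWc σ σ'' i • Vfun K σ τ σ'' τ'' hbK hbD i) := by
      intro i hi
      rw [smul_smul, sgnB' σ σ'' hσ i (Finset.mem_inter.1 hi).1, neg_smul]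
    rw [Finset.sum_congr rfl hcancel, Finset.sum_neg_distrib]
    abel
  · -- degenerate case : all three terms vanish
    have h0 : capMon K (⟨(σ,τ),haK,haD⟩ : DSIdx K) ⟨(σ'',τ''),hbK,hbD⟩ = 0 := by
      exact capMon_neg _ _ hC
    rw [h0, map_zero]
    have h1 : ∀ i ∈ τ, (if h : insert i σ ∈ K.faces then
        csg i σ • capMon K (⟨(insert i σ, τ.erase i), ⟨h, by
          refine Finset.disjoint_left.2 fun x hx hx' => ?_
          rcases Finset.mem_insert.1 hx with h' | h'
          · exact (Finset.mem_erase.1 hx').1 h'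
          · exact (Finset.disjoint_left.1 haD h') (Finset.mem_of_mem_erase hx')⟩⟩ : DSIdx K)
          ⟨(σ'',τ''),hbK,hbD⟩ else 0) = 0 := by
      intro i hi
      split_ifs with h
      · refine (congrArg (csg i σ • ·) (capMon_neg _ _ ?_)).trans (smul_zero _)
        rintro ⟨h1, h2⟩
        refine hC ⟨(Finset.subset_insert i σ).trans h1, fun x hx => ?_⟩
        by_cases hxi : x = i
        · exact Finset.mem_union_left _ (h1 (hxi ▸ Finset.mem_insert_self i σ))
        · exact h2 (Finset.mem_erase.2 ⟨hxi, hx⟩)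
      · rfl
    have h2 : ∀ k ∈ σ'', csg k σ'' • capMon K (⟨(σ,τ),haK,haD⟩ : DSIdx K)
        (⟨(σ''.erase k, insert k τ''), ⟨K.down_closed hbK (Finset.erase_subset _ _), by
          refine Finset.disjoint_left.2 fun x hx hx' => ?_
          rcases Finset.mem_insert.1 hx' with h | h
          · exact (Finset.mem_erase.1 hx).1 h
          · exact (Finset.disjoint_left.1 hbD (Finset.mem_of_mem_erase hx)) h⟩⟩ : DSIdx K) = 0 := by
      intro k hk
      refine (congrArg (csg k σ'' • ·) (capMon_neg _ _ ?_)).trans (smul_zero _)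
      rintro ⟨h1, h2⟩
      refine hC ⟨h1.trans (Finset.erase_subset _ _), ?_⟩
      rw [← erase_union_insert (τ'' := τ'') hk]
      exact h2
    rw [Finset.sum_congr rfl h1, Finset.sum_congr rfl h2]
    simp
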